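/- arXiv:2604.26069 — 2 statements merged into one kernel-verified Lean document; each statement's English description precedes it below -/
import Mathlib

section
/- Fix γ > 0 and define σ_{δ,m} = m·(1 − δ^{γ/m})·δ^{(γ/2)(1 − 1/m)} / (−log δ) for δ ∈ (0,1) and integers m ≥ 2. Then σ_{δ,m} is decreasing in m and increasing in δ, and γ·δ^{γ/2} < σ_{δ,m} < γ for all δ ∈ (0,1) and m ≥ 2; moreover, for fixed δ, σ_{δ,m} → γ·δ^{γ/2} as m → ∞, and for fixed m, σ_{δ,m} → γ as δ → 1⁻. -/
open MeasureTheory ProbabilityTheory Filter Set Asymptotics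
open scoped ENNReal NNReal Topology Classical

noncomputable section

namespace GeomRecords

variable {Ω : Type*} [MeasurableSpace Ω]

/-- `X` has a `Pareto(γ, D)` distribution under `μ`: its survival function is
`P(X > x) = (x/D)^{-γ}` for `x > D`. -/
def IsPareto (μ : Measure Ω) (X : Ω → ℝ) (γ D : ℝ) : Prop :=
  ∀ x : ℝ, D < x → μ {ω | x < X ω} = ENNReal.ofReal ((x / D) ^ (-γ))

/-- `X` has a Pareto-type distribution: its survival function is
`P(X > x) = x^{-γ} L x` for `x > D`. -/
def IsParetoType (μ : Measure Ω) (X : Ω → ℝ) (γ D : ℝ) (L : ℝ → ℝ) : Prop :=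
  ∀ x : ℝ, D < x → μ {ω | x < X ω} = ENNReal.ofReal (x ^ (-γ) * L x)

/-- `L` is slowly varying at infinity. -/
def SlowlyVarying (L : ℝ → ℝ) : Prop :=
  ∀ t : ℝ, 0 < t → Tendsto (fun x => L (t * x) / L x) atTop (𝓝 1)

/-- Time of the `(i+1)`-th record of the sequence `X` (`0`-based indexing of records;
the first observation is a record). -/
def recTime (X : ℕ → Ω → ℝ) (ω : Ω) : ℕ → ℕ
  | 0 => 0
  | i + 1 => sInf {j | recTime X ω i < j ∧ X (recTime X ω i) ω < X j ω}

/-- Value of the `(i+1)`-th record (`0`-based). -/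
def recVal (X : ℕ → Ω → ℝ) (ω : Ω) (i : ℕ) : ℝ := X (recTime X ω i) ω

/-- Index (`0`-based) of the first record exceeding the threshold `A`. -/
def recStart (X : ℕ → Ω → ℝ) (A : ℝ) (ω : Ω) : ℕ := sInf {i | A < recVal X ω i}

/-- Sample record values: `R 1, R 2, …` are the successive records once an observation
exceeding the threshold `A` has appeared in the sequence; by convention `R 0 = A`. -/
def R (X : ℕ → Ω → ℝ) (A : ℝ) (i : ℕ) (ω : Ω) : ℝ :=
  if i = 0 then A else recVal X ω (recStart X A ω + (i - 1))

/-- Times of the geometric near-records, for the transformed sequence `g ∘ X`,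
associated with the `i`-th sample record (`i ≥ 1`): the times `j` strictly between the
record times of the `i`-th and `(i+1)`-th sample records with `g (X j) > δ · g (R i)`. -/
def nearRecTimesT (g : ℝ → ℝ) (X : ℕ → Ω → ℝ) (δ A : ℝ) (i : ℕ) (ω : Ω) : Finset ℕ :=
  (Finset.Ioo (recTime X ω (recStart X A ω + (i - 1)))
      (recTime X ω (recStart X A ω + i))).filter
    fun j => δ * g (R X A i ω) < g (X j ω)

/-- Times of the geometric near-records associated with the `i`-th sample record. -/
def nearRecTimes (X : ℕ → Ω → ℝ) (δ A : ℝ) (i : ℕ) (ω : Ω) : Finset ℕ :=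
  nearRecTimesT id X δ A i ω

/-- `S i`: number of geometric near-records associated with the `i`-th sample record. -/
def S (X : ℕ → Ω → ℝ) (δ A : ℝ) (i : ℕ) (ω : Ω) : ℕ := (nearRecTimes X δ A i ω).card

/-- Time of the `j`-th (`1`-based) geometric near-record associated with `R i`. -/
def nearRecTime (X : ℕ → Ω → ℝ) (δ A : ℝ) (i j : ℕ) (ω : Ω) : ℕ :=
  ((nearRecTimes X δ A i ω).sort (· ≤ ·)).getD (j - 1) 0

/-- `a = δ^{-1/m}`. -/
def base (δ : ℝ) (m : ℕ) : ℝ := δ ^ (-(1 : ℝ) / m)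

/-- Discretization index of a value `x` relative to the level `r`: the `v` such that
`x ∈ (a^v δ r, a^{v+1} δ r]`, i.e. `⌈log_a (x / (δ r))⌉ - 1`, with `a = δ^{-1/m}`. -/
def discIdx (δ : ℝ) (m : ℕ) (r x : ℝ) : ℕ :=
  (⌈Real.logb (base δ m) (x / (δ * r))⌉ - 1).toNat

/-- `V i j`: discretization index of the `j`-th geometric near-record associated with `R i`. -/
def V (X : ℕ → Ω → ℝ) (δ A : ℝ) (m : ℕ) (i j : ℕ) (ω : Ω) : ℕ :=
  discIdx δ m (R X A i ω) (X (nearRecTime X δ A i j ω) ω)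

/-- `K i = ⌈log_a (R i / R (i-1))⌉ - 1`, with `a = δ^{-1/m}`. -/
def K (X : ℕ → Ω → ℝ) (δ A : ℝ) (m : ℕ) (i : ℕ) (ω : Ω) : ℕ :=
  (⌈Real.logb (base δ m) (R X A i ω / R X A (i - 1) ω)⌉ - 1).toNat

/-- The estimator `β̂` computed from an arbitrary sample `(K, S, V)`. -/
def betaHatOf (Kf Sf : ℕ → Ω → ℕ) (Vf : ℕ → ℕ → Ω → ℕ) (m n : ℕ) (ω : Ω) : ℝ :=
  ((m * n : ℝ) + ∑ i ∈ Finset.Icc 1 n, ∑ j ∈ Finset.Icc 1 (Sf i ω), (Vf i j ω : ℝ)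
      + ∑ i ∈ Finset.Icc 1 n, (Kf i ω : ℝ)) /
  (((m + 1 : ℕ) * n : ℝ) + ∑ i ∈ Finset.Icc 1 n, ∑ j ∈ Finset.Icc 1 (Sf i ω), (Vf i j ω : ℝ)
      + ∑ i ∈ Finset.Icc 1 n, (Kf i ω : ℝ) + ∑ i ∈ Finset.Icc 1 n, (Sf i ω : ℝ))

/-- The estimator `γ̂ = m log_δ β̂` computed from an arbitrary sample `(K, S, V)`. -/
def gammaHatOf (δ : ℝ) (Kf Sf : ℕ → Ω → ℕ) (Vf : ℕ → ℕ → Ω → ℕ) (m n : ℕ) (ω : Ω) : ℝ :=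
  m * Real.logb δ (betaHatOf Kf Sf Vf m n ω)

/-- The maximum-likelihood estimator `γ̂^A_{δ,m,n}` based on the sample `T_n = (K, S, V)`. -/
def gammaHat (X : ℕ → Ω → ℝ) (δ A : ℝ) (m n : ℕ) (ω : Ω) : ℝ :=
  gammaHatOf δ (fun i => K X δ A m i) (fun i => S X δ A i) (fun i j => V X δ A m i j) m n ω

/-- `ν` is the geometric distribution `Geom*(p)` on `{0,1,2,…}` with success probability `p`. -/
def IsGeomStar (ν : Measure ℕ) (p : ℝ) : Prop :=
  ∀ k : ℕ, ν {k} = ENNReal.ofReal ((1 - p) ^ k * p)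

/-- `ν` is the geometric distribution with success probability `p` truncated to `{0,…,m-1}`. -/
def IsTruncGeom (ν : Measure ℕ) (p : ℝ) (m : ℕ) : Prop :=
  ∀ v : ℕ, ν {v} =
    if v < m then ENNReal.ofReal ((1 - p) ^ v * p / (1 - (1 - p) ^ m)) else 0

/-- The asymptotic standard deviation `σ_{δ,m}`. -/
def sigma (γ δ : ℝ) (m : ℕ) : ℝ :=
  m * (1 - δ ^ (γ / m)) * δ ^ ((γ / 2) * (1 - 1 / m)) / (-Real.log δ)

/-- `φ(x) = F̄(x)^{-1/γ} = x · L(x)^{-1/γ}`. -/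
def phi (γ : ℝ) (L : ℝ → ℝ) (x : ℝ) : ℝ := x * L x ^ (-(1 : ℝ) / γ)

/-- The starred record values `R*_i = φ(R_i)`. -/
def Rstar (X : ℕ → Ω → ℝ) (γ A : ℝ) (L : ℝ → ℝ) (i : ℕ) (ω : Ω) : ℝ :=
  phi γ L (R X A i ω)

/-- `S*_i`: number of geometric near-records associated with `R*_i` in the starred sequence. -/
def Sstar (X : ℕ → Ω → ℝ) (γ δ A : ℝ) (L : ℝ → ℝ) (i : ℕ) (ω : Ω) : ℕ :=
  (nearRecTimesT (phi γ L) X δ A i ω).card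

/-- Time of the `j`-th (`1`-based) geometric near-record associated with `R*_i`. -/
def nearRecTimeStar (X : ℕ → Ω → ℝ) (γ δ A : ℝ) (L : ℝ → ℝ) (i j : ℕ) (ω : Ω) : ℕ :=
  ((nearRecTimesT (phi γ L) X δ A i ω).sort (· ≤ ·)).getD (j - 1) 0

/-- `V*_i^j`: discretization index of the `j`-th geometric near-record associated with `R*_i`. -/
def Vstar (X : ℕ → Ω → ℝ) (γ δ A : ℝ) (L : ℝ → ℝ) (m : ℕ) (i j : ℕ) (ω : Ω) : ℕ :=
  discIdx δ m (Rstar X γ A L i ω) (phi γ L (X (nearRecTimeStar X γ δ A L i j ω) ω))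

/-- `K*_i = ⌈log_a (R*_i / R*_{i-1})⌉ - 1`. -/
def Kstar (X : ℕ → Ω → ℝ) (γ δ A : ℝ) (L : ℝ → ℝ) (m : ℕ) (i : ℕ) (ω : Ω) : ℕ :=
  (⌈Real.logb (base δ m) (Rstar X γ A L i ω / Rstar X γ A L (i - 1) ω)⌉ - 1).toNat

/-- `I = inf {i ≥ 1 : R*_i > δ⁻¹}`. -/
def Istar (X : ℕ → Ω → ℝ) (γ δ A : ℝ) (L : ℝ → ℝ) (ω : Ω) : ℕ :=
  sInf {i : ℕ | 1 ≤ i ∧ δ⁻¹ < Rstar X γ A L i ω}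

/-- The σ-algebra `G` generated by the (sample) record values. -/
def recSigma (X : ℕ → Ω → ℝ) (A : ℝ) : MeasurableSpace Ω :=
  MeasurableSpace.comap (fun ω => (fun i => R X A i ω : ℕ → ℝ)) inferInstance

/-- A version of the conditional probability `P(E | G)`, as a function of `ω`. -/
def condProb (μ : Measure Ω) (G : MeasurableSpace Ω) (E : Set Ω) : Ω → ℝ :=
  MeasureTheory.condExp G μ (E.indicator fun _ => (1 : ℝ))

/-- Condition (C): `L` is differentiable on `(D, ∞)` and
`x L'(x) / L(x) = o(1 / (log x (log log x)^{2+η}))` as `x → ∞`. -/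
def CondC (D : ℝ) (L : ℝ → ℝ) (η : ℝ) : Prop :=
  (∀ x : ℝ, D < x → DifferentiableAt ℝ L x) ∧
    (fun x => x * deriv L x / L x) =o[atTop]
      fun x => 1 / (Real.log x * Real.log (Real.log x) ^ (2 + η))


/-! ### Auxiliary material for Statement 9 -/

/-- The reduced variable `y = γ (−log δ) / (2m)`. -/
def yy (γ δ : ℝ) (m : ℕ) : ℝ := γ * (-Real.log δ) / (2 * m)

lemma yy_pos {γ δ : ℝ} (hγ : 0 < γ) (hδ0 : 0 < δ) (hδ1 : δ < 1) {m : ℕ} (hm : 1 ≤ m) :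
    0 < yy γ δ m := by
  have ht : 0 < -Real.log δ := by
    have := Real.log_neg hδ0 hδ1; linarith
  have hm' : (0 : ℝ) < m := by exact_mod_cast hm
  exact div_pos (mul_pos hγ ht) (by linarith)

lemma aux_sinh_lt_mul_cosh {y : ℝ} (hy : 0 < y) : Real.sinh y < y * Real.cosh y := by
  have h : StrictMonoOn (fun y : ℝ => y * Real.cosh y - Real.sinh y) (Set.Ici 0) := by
    apply strictMonoOn_of_deriv_pos (convex_Ici 0)
    · fun_prop
    · intro x hx
      rw [interior_Ici] at hx
      have hd : HasDerivAt (fun y : ℝ => y * Real.cosh y - Real.sinh y)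
          (1 * Real.cosh x + x * Real.sinh x - Real.cosh x) x :=
        ((hasDerivAt_id x).mul (Real.hasDerivAt_cosh x)).sub (Real.hasDerivAt_sinh x)
      rw [hd.deriv]
      have hx' : 0 < x := hx
      have hs : 0 < Real.sinh x := Real.sinh_pos_iff.2 hx'
      nlinarith [mul_pos hx' hs]
  have h0 := h (Set.self_mem_Ici) (Set.mem_Ici.2 hy.le) hy
  simp only [Real.cosh_zero, Real.sinh_zero, mul_one, zero_mul, sub_zero] at h0
  linarith

lemma aux_mul_exp_neg_lt_sinh {y : ℝ} (hy : 0 < y) : y * Real.exp (-y) < Real.sinh y := by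
  have h := Real.add_one_lt_exp (by positivity : (2 * y : ℝ) ≠ 0)
  rw [Real.sinh_eq]
  have he : Real.exp (2 * y) * Real.exp (-y) = Real.exp y := by
    rw [← Real.exp_add]; ring_nf
  nlinarith [mul_pos (by linarith : (0:ℝ) < Real.exp (2 * y) - (2 * y + 1)) (Real.exp_pos (-y)),
    Real.exp_pos (-y), Real.exp_pos y]

lemma aux_sinh_lt_mul_exp {y : ℝ} (hy : 0 < y) : Real.sinh y < y * Real.exp y := by
  have h := Real.add_one_lt_exp (ne_of_lt (by linarith : (-(2 * y) : ℝ) < 0))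
  rw [Real.sinh_eq]
  have he : Real.exp (-(2 * y)) * Real.exp y = Real.exp (-y) := by
    rw [← Real.exp_add]; ring_nf
  nlinarith [mul_pos (by linarith : (0:ℝ) < Real.exp (-(2 * y)) - (-(2 * y) + 1)) (Real.exp_pos y),
    Real.exp_pos (-y), Real.exp_pos y]

lemma aux_F_strictMono : StrictMonoOn (fun y : ℝ => Real.sinh y / y) (Set.Ioi 0) := by
  apply strictMonoOn_of_deriv_pos (convex_Ioi 0)
  · exact Real.continuous_sinh.continuousOn.div continuousOn_id fun x hx => ne_of_gt hx
  · intro x hx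
    rw [interior_Ioi] at hx
    have hd : HasDerivAt (fun y : ℝ => Real.sinh y / y)
        ((Real.cosh x * x - Real.sinh x * 1) / x ^ 2) x :=
      (Real.hasDerivAt_sinh x).div (hasDerivAt_id x) (ne_of_gt hx)
    rw [hd.deriv]
    have hx0 : 0 < x := hx
    have h1 := aux_sinh_lt_mul_cosh hx0
    have h2 : (0 : ℝ) < x ^ 2 := by positivity
    apply div_pos _ h2
    nlinarith

lemma aux_H_strictAnti {c : ℝ} (hc : 1 ≤ c) :
    StrictAntiOn (fun y : ℝ => Real.exp (-(c * y)) * (Real.sinh y / y)) (Set.Ioi 0) := by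
  apply strictAntiOn_of_deriv_neg (convex_Ioi 0)
  · apply ContinuousOn.mul
    · fun_prop
    · exact Real.continuous_sinh.continuousOn.div continuousOn_id fun x hx => ne_of_gt hx
  · intro x hx
    rw [interior_Ioi] at hx
    have hexp : HasDerivAt (fun y : ℝ => Real.exp (-(c * y))) (Real.exp (-(c * x)) * (-c)) x := by
      have h1 : HasDerivAt (fun y : ℝ => -(c * y)) (-c) x := by
        exact ((hasDerivAt_id x).const_mul c).neg.congr_deriv (by simp)
      exact (Real.hasDerivAt_exp _).comp x h1
    have hF : HasDerivAt (fun y : ℝ => Real.sinh y / y)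
        ((Real.cosh x * x - Real.sinh x * 1) / x ^ 2) x :=
      (Real.hasDerivAt_sinh x).div (hasDerivAt_id x) (ne_of_gt hx)
    have hd : HasDerivAt (fun y : ℝ => Real.exp (-(c * y)) * (Real.sinh y / y))
        (Real.exp (-(c * x)) *
          ((Real.cosh x * x - Real.sinh x - c * (x * Real.sinh x)) / x ^ 2)) x := by
      refine (hexp.mul hF).congr_deriv ?_
      have hx0 : x ≠ 0 := ne_of_gt hx
      field_simp
      ring
    rw [hd.deriv]
    have hx' : 0 < x := hx
    apply mul_neg_of_pos_of_neg (Real.exp_pos _)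
    apply div_neg_of_neg_of_pos _ (by positivity)
    have h2 := aux_mul_exp_neg_lt_sinh hx'
    have h3 : x * Real.cosh x - x * Real.sinh x = x * Real.exp (-x) := by
      rw [← mul_sub, Real.cosh_sub_sinh]
    have h4 : 0 < Real.sinh x := Real.sinh_pos_iff.2 hx'
    nlinarith [mul_nonneg (mul_nonneg (sub_nonneg.2 hc) hx'.le) h4.le]

lemma aux_alg {γ t : ℝ} (hγ : 0 < γ) (ht : 0 < t) {c : ℝ} (hc : 1 ≤ c) :
    c * (1 - Real.exp (-t * γ / c)) * Real.exp (-t * (γ / 2 * (1 - 1 / c))) / t =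
      γ * (Real.exp (-(c * (γ * t / (2 * c)))) * (Real.sinh (γ * t / (2 * c)) / (γ * t / (2 * c)))) := by
  have hcpos : 0 < c := lt_of_lt_of_le one_pos hc
  have hc0 : c ≠ 0 := ne_of_gt hcpos
  have ht0 : t ≠ 0 := ne_of_gt ht
  have hy : γ * t / (2 * c) ≠ 0 := by positivity
  set y : ℝ := γ * t / (2 * c) with hydef
  have e1 : -t * γ / c = -(2 * y) := by rw [hydef]; field_simp; try ring
  have e2 : -t * (γ / 2 * (1 - 1 / c)) = -(c * y) + y := by rw [hydef]; field_simp; try ring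
  have hγt : γ = 2 * c * y / t := by rw [hydef]; field_simp; try ring
  rw [e1, e2, Real.sinh_eq, Real.exp_add]
  have e3 : Real.exp (-(2 * y)) = Real.exp (-y) * Real.exp (-y) := by
    rw [← Real.exp_add]; ring_nf
  have e4 : Real.exp (-y) = (Real.exp y)⁻¹ := Real.exp_neg y
  rw [e3, e4, hγt]
  have hE : Real.exp y ≠ 0 := (Real.exp_pos y).ne'
  field_simp
  try ring

lemma sigma_eq (γ δ : ℝ) (hγ : 0 < γ) (hδ0 : 0 < δ) (hδ1 : δ < 1) {m : ℕ} (hm : 1 ≤ m) :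
    sigma γ δ m =
      γ * (Real.exp (-((m : ℝ) * yy γ δ m)) * (Real.sinh (yy γ δ m) / yy γ δ m)) := by
  have hm' : (0 : ℝ) < m := by exact_mod_cast hm
  have ht : 0 < -Real.log δ := by have := Real.log_neg hδ0 hδ1; linarith
  have key := aux_alg hγ ht (c := (m : ℝ)) (by exact_mod_cast hm)
  unfold sigma yy
  rw [Real.rpow_def_of_pos hδ0, Real.rpow_def_of_pos hδ0]
  rw [show Real.log δ * (γ / (m : ℝ)) = -(-Real.log δ) * γ / (m : ℝ) by ring,
    show Real.log δ * (γ / 2 * (1 - 1 / (m : ℝ))) = -(-Real.log δ) * (γ / 2 * (1 - 1 / (m : ℝ))) by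
      ring]
  convert key using 3 <;> ring

lemma rpow_half_eq (γ δ : ℝ) (hδ0 : 0 < δ) {m : ℕ} (hm : 1 ≤ m) :
    δ ^ (γ / 2) = Real.exp (-((m : ℝ) * yy γ δ m)) := by
  have hm' : ((m : ℝ)) ≠ 0 := Nat.cast_ne_zero.2 (by omega)
  rw [Real.rpow_def_of_pos hδ0]
  congr 1
  unfold yy
  field_simp

lemma tendsto_sinh_div : Tendsto (fun y : ℝ => Real.sinh y / y) (𝓝[>] 0) (𝓝 1) := by
  have h := (hasDerivAt_iff_tendsto_slope).1 (Real.hasDerivAt_sinh 0)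
  rw [Real.cosh_zero] at h
  have h2 : Tendsto (slope Real.sinh 0) (𝓝[>] (0 : ℝ)) (𝓝 1) :=
    h.mono_left (nhdsWithin_mono _ fun x hx => ne_of_gt hx)
  refine h2.congr fun y => ?_
  simp [slope_def_field, Real.sinh_zero]

/-- Monotonicity, bounds and limits of the asymptotic standard deviation
`σ_{δ,m}`. -/
theorem sigma_monotone_bounds_limits (γ : ℝ) (hγ : 0 < γ) :
    (∀ δ : ℝ, δ ∈ Set.Ioo (0 : ℝ) 1 → ∀ m₁ m₂ : ℕ, 2 ≤ m₁ → m₁ < m₂ →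
      sigma γ δ m₂ < sigma γ δ m₁) ∧
    (∀ δ₁ δ₂ : ℝ, δ₁ ∈ Set.Ioo (0 : ℝ) 1 → δ₂ ∈ Set.Ioo (0 : ℝ) 1 → δ₁ < δ₂ →
      ∀ m : ℕ, 2 ≤ m → sigma γ δ₁ m < sigma γ δ₂ m) ∧
    (∀ δ : ℝ, δ ∈ Set.Ioo (0 : ℝ) 1 → ∀ m : ℕ, 2 ≤ m →
      γ * δ ^ (γ / 2) < sigma γ δ m ∧ sigma γ δ m < γ) ∧
    (∀ δ : ℝ, δ ∈ Set.Ioo (0 : ℝ) 1 →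
      Tendsto (fun m : ℕ => sigma γ δ m) atTop (𝓝 (γ * δ ^ (γ / 2)))) ∧
    (∀ m : ℕ, 2 ≤ m → Tendsto (fun δ : ℝ => sigma γ δ m) (𝓝[<] (1 : ℝ)) (𝓝 γ)) := by
  refine ⟨?_, ?_, ?_, ?_, ?_⟩
  · -- decreasing in m
    rintro δ ⟨hδ0, hδ1⟩ m₁ m₂ hm₁ hlt
    have hm₁' : 1 ≤ m₁ := by omega
    have hm₂' : 1 ≤ m₂ := by omega
    have hy₁ := yy_pos hγ hδ0 hδ1 hm₁'
    have hy₂ := yy_pos hγ hδ0 hδ1 hm₂'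
    have ht : 0 < -Real.log δ := by have := Real.log_neg hδ0 hδ1; linarith
    have hylt : yy γ δ m₂ < yy γ δ m₁ := by
      unfold yy
      have hm₁0 : (0 : ℝ) < 2 * m₁ := by
        have : (0 : ℝ) < m₁ := by exact_mod_cast hm₁'
        linarith
      have hcast : (2 : ℝ) * m₁ < 2 * m₂ := by
        have : (m₁ : ℝ) < m₂ := by exact_mod_cast hlt
        linarith
      exact div_lt_div_of_pos_left (mul_pos hγ ht) hm₁0 hcast
    rw [sigma_eq γ δ hγ hδ0 hδ1 hm₁', sigma_eq γ δ hγ hδ0 hδ1 hm₂',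
      ← rpow_half_eq γ δ hδ0 hm₁', ← rpow_half_eq γ δ hδ0 hm₂']
    have hF := aux_F_strictMono (Set.mem_Ioi.2 hy₂) (Set.mem_Ioi.2 hy₁) hylt
    have hp : 0 < δ ^ (γ / 2) := Real.rpow_pos_of_pos hδ0 _
    have h1 : δ ^ (γ / 2) * (Real.sinh (yy γ δ m₂) / yy γ δ m₂) <
        δ ^ (γ / 2) * (Real.sinh (yy γ δ m₁) / yy γ δ m₁) :=
      mul_lt_mul_of_pos_left hF hp
    exact mul_lt_mul_of_pos_left h1 hγ
  · -- increasing in δ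
    rintro δ₁ δ₂ ⟨h10, h11⟩ ⟨h20, h21⟩ hlt m hm
    have hm' : 1 ≤ m := by omega
    have hy₁ := yy_pos hγ h10 h11 hm'
    have hy₂ := yy_pos hγ h20 h21 hm'
    have hylt : yy γ δ₂ m < yy γ δ₁ m := by
      unfold yy
      have hlog : Real.log δ₁ < Real.log δ₂ := Real.log_lt_log h10 hlt
      have hm0 : (0 : ℝ) < 2 * m := by
        have : (0 : ℝ) < m := by exact_mod_cast hm'
        linarith
      apply div_lt_div_of_pos_right _ hm0
      nlinarith
    rw [sigma_eq γ δ₁ hγ h10 h11 hm', sigma_eq γ δ₂ hγ h20 h21 hm']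
    have hc : (1 : ℝ) ≤ (m : ℝ) := by exact_mod_cast hm'
    have hH := aux_H_strictAnti hc (Set.mem_Ioi.2 hy₂) (Set.mem_Ioi.2 hy₁) hylt
    exact mul_lt_mul_of_pos_left hH hγ
  · -- bounds
    rintro δ ⟨hδ0, hδ1⟩ m hm
    have hm' : 1 ≤ m := by omega
    have hy := yy_pos hγ hδ0 hδ1 hm'
    constructor
    · rw [sigma_eq γ δ hγ hδ0 hδ1 hm', ← rpow_half_eq γ δ hδ0 hm']
      have h1 : 1 < Real.sinh (yy γ δ m) / yy γ δ m :=
        (one_lt_div hy).2 (Real.self_lt_sinh_iff.2 hy)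
      have hp : 0 < δ ^ (γ / 2) := Real.rpow_pos_of_pos hδ0 _
      nlinarith [mul_pos hγ hp]
    · rw [sigma_eq γ δ hγ hδ0 hδ1 hm']
      set y := yy γ δ m with hydef
      have hmy : y ≤ (m : ℝ) * y := by
        have : (1 : ℝ) ≤ (m : ℝ) := by exact_mod_cast hm'
        nlinarith
      have hkey : Real.sinh y < y * Real.exp ((m : ℝ) * y) := by
        have h1 := aux_sinh_lt_mul_exp hy
        have h2 : Real.exp y ≤ Real.exp ((m : ℝ) * y) := Real.exp_le_exp.2 hmy
        nlinarith
      have h3 : Real.sinh y / y < Real.exp ((m : ℝ) * y) := by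
        rw [div_lt_iff₀ hy]
        nlinarith
      have h4 : Real.exp (-((m : ℝ) * y)) * (Real.sinh y / y) < 1 := by
        have h5 : Real.exp (-((m : ℝ) * y)) * (Real.sinh y / y) <
            Real.exp (-((m : ℝ) * y)) * Real.exp ((m : ℝ) * y) :=
          mul_lt_mul_of_pos_left h3 (Real.exp_pos _)
        rwa [← Real.exp_add, neg_add_cancel, Real.exp_zero] at h5
      nlinarith
  · -- limit in m
    rintro δ ⟨hδ0, hδ1⟩
    have hyy : Tendsto (fun m : ℕ => yy γ δ m) atTop (𝓝[>] 0) := by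
      rw [tendsto_nhdsWithin_iff]
      constructor
      · have heq : (fun m : ℕ => yy γ δ m) =
            fun m : ℕ => (γ * (-Real.log δ) / 2) / (m : ℝ) := by
          funext m; unfold yy; rw [div_div]
        rw [heq]
        exact tendsto_const_div_atTop_nhds_zero_nat _
      · filter_upwards [eventually_ge_atTop 1] with m hm using yy_pos hγ hδ0 hδ1 hm
    have hF : Tendsto (fun m : ℕ => Real.sinh (yy γ δ m) / yy γ δ m) atTop (𝓝 1) :=
      tendsto_sinh_div.comp hyy
    have hmain : Tendsto
        (fun m : ℕ => γ * (δ ^ (γ / 2) * (Real.sinh (yy γ δ m) / yy γ δ m))) atTop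
        (𝓝 (γ * (δ ^ (γ / 2) * 1))) :=
      tendsto_const_nhds.mul (tendsto_const_nhds.mul hF)
    rw [mul_one] at hmain
    refine Tendsto.congr' ?_ hmain
    filter_upwards [eventually_ge_atTop 1] with m hm
    rw [sigma_eq γ δ hγ hδ0 hδ1 hm, ← rpow_half_eq γ δ hδ0 hm]
  · -- limit in δ
    intro m hm
    have hm' : 1 ≤ m := by omega
    have hmem : Set.Ioo (0 : ℝ) 1 ∈ 𝓝[<] (1 : ℝ) :=
      Ioo_mem_nhdsLT_of_mem (by constructor <;> norm_num)
    have hy : Tendsto (fun δ : ℝ => yy γ δ m) (𝓝[<] 1) (𝓝[>] 0) := by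
      rw [tendsto_nhdsWithin_iff]
      constructor
      · have hcont : ContinuousAt (fun δ : ℝ => yy γ δ m) 1 := by
          have hlog : ContinuousAt Real.log 1 := Real.continuousAt_log one_ne_zero
          unfold yy
          exact ((hlog.neg.const_mul γ).div_const _)
        have h0 : yy γ 1 m = 0 := by unfold yy; simp
        have h1 := hcont.tendsto
        rw [h0] at h1
        exact h1.mono_left nhdsWithin_le_nhds
      · filter_upwards [hmem] with δ hδ using yy_pos hγ hδ.1 hδ.2 hm'
    have hy0 : Tendsto (fun δ : ℝ => yy γ δ m) (𝓝[<] 1) (𝓝 0) :=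
      hy.mono_right nhdsWithin_le_nhds
    have hexp : Tendsto (fun δ : ℝ => Real.exp (-((m : ℝ) * yy γ δ m))) (𝓝[<] 1) (𝓝 1) := by
      have h1 : Tendsto (fun δ : ℝ => -((m : ℝ) * yy γ δ m)) (𝓝[<] 1) (𝓝 (-((m : ℝ) * 0))) :=
        (hy0.const_mul _).neg
      rw [mul_zero, neg_zero] at h1
      have h2 := (Real.continuous_exp.tendsto 0).comp h1
      rw [Real.exp_zero] at h2; exact h2
    have hF : Tendsto (fun δ : ℝ => Real.sinh (yy γ δ m) / yy γ δ m) (𝓝[<] 1) (𝓝 1) :=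
      tendsto_sinh_div.comp hy
    have hmain : Tendsto
        (fun δ : ℝ => γ * (Real.exp (-((m : ℝ) * yy γ δ m)) *
          (Real.sinh (yy γ δ m) / yy γ δ m))) (𝓝[<] 1) (𝓝 (γ * (1 * 1))) :=
      tendsto_const_nhds.mul (hexp.mul hF)
    rw [mul_one, mul_one] at hmain
    refine Tendsto.congr' ?_ hmain
    filter_upwards [hmem] with δ hδ
    exact (sigma_eq γ δ hγ hδ.1 hδ.2 hm').symm

end GeomRecords
end
end

section
/- Let {E_n}_{n∈ℕ} be a sequence of i.i.d. random variables following an exponential distribution with rate λ > 0, let {x} denote the fractional part of a real number x, and let {a_n}_{n∈ℕ} be a sequence of positive real numbers with a_n → ∞. Then, almost surely, liminf_{n→∞} a_n·{E_n} equals either 0 or ∞ (a constant); moreover liminf_{n→∞} a_n·{E_n} = 0 almost surely if and only if Σ_{n=1}^∞ 1/a_n = ∞ (and liminf_{n→∞} a_n·{E_n} = ∞ almost surely if Σ_{n=1}^∞ 1/a_n < ∞). -/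
open MeasureTheory ProbabilityTheory Filter Set Asymptotics
open scoped ENNReal NNReal Topology Classical

noncomputable section

namespace GeomRecords

variable {Ω : Type*} [MeasurableSpace Ω]

lemma GR_exp_sub_exp_le {x : ℝ} (hx : 0 ≤ x) :
    Real.exp x - Real.exp (-x) ≤ 2 * x * Real.exp x := by
  have h1 : (-(2 * x)) + 1 ≤ Real.exp (-(2 * x)) := Real.add_one_le_exp _
  have h2 : Real.exp (-x) = Real.exp x * Real.exp (-(2 * x)) := by
    rw [← Real.exp_add]; ring_nf
  nlinarith [Real.exp_pos x]

lemma GR_half_le_one_sub_exp {x : ℝ} (h0 : 0 ≤ x) (h1 : x ≤ 1) :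
    x / 2 ≤ 1 - Real.exp (-x) := by
  have hx : (0 : ℝ) < 1 + x := by linarith
  have h2 : 1 + x ≤ Real.exp x := by have := Real.add_one_le_exp x; linarith
  have h3 : Real.exp (-x) * (1 + x) ≤ 1 := by
    rw [Real.exp_neg]
    have := Real.exp_pos x
    rw [inv_mul_le_iff₀ this] -- (exp x)⁻¹ * (1+x) ≤ 1 ↔ 1+x ≤ exp x * 1? check
    linarith
  nlinarith [Real.exp_pos (-x)]

lemma GR_one_sub_exp_le {x : ℝ} (hx : 0 ≤ x) : 1 - Real.exp (-x) ≤ x := by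
  have := Real.add_one_le_exp (-x); linarith

/-- Upper bound for the probability that the fractional part is small. -/
lemma GR_meas_fract_lt_le (μ : Measure Ω) [IsProbabilityMeasure μ] {X : Ω → ℝ}
    (hX : Measurable X) {lam : ℝ} (hlam : 0 < lam)
    (hsurv : ∀ x : ℝ, 0 ≤ x → μ {ω | x < X ω} = ENNReal.ofReal (Real.exp (-lam * x)))
    {ε : ℝ} (hε : 0 < ε) (hε1 : ε ≤ 1) :
    μ {ω | Int.fract (X ω) < ε} ≤
      ENNReal.ofReal (2 * lam * Real.exp lam / (1 - Real.exp (-lam)) * ε) := by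
  set A : ℕ → Set Ω := fun k => {ω | ((k : ℝ) ≤ X ω ∨ k = 0) ∧ X ω < (k : ℝ) + ε} with hA
  have hsub : {ω | Int.fract (X ω) < ε} ⊆ ⋃ k, A k := by
    intro ω hω
    rcases le_or_gt (⌊X ω⌋ : ℤ) 0 with hk | hk
    · refine mem_iUnion.2 ⟨0, Or.inr rfl, ?_⟩
      have h1 := Int.floor_add_fract (X ω)
      have h2 : ((⌊X ω⌋ : ℝ)) ≤ 0 := by exact_mod_cast hk
      push_cast
      have : Int.fract (X ω) < ε := hω
      linarith
    · refine mem_iUnion.2 ⟨(⌊X ω⌋).toNat, Or.inl ?_, ?_⟩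
      · have : ((⌊X ω⌋).toNat : ℝ) = ((⌊X ω⌋ : ℤ) : ℝ) := by
          exact_mod_cast Int.toNat_of_nonneg hk.le
        rw [this]; exact Int.floor_le (X ω)
      · have h1 := Int.floor_add_fract (X ω)
        have h2 : ((⌊X ω⌋).toNat : ℝ) = ((⌊X ω⌋ : ℤ) : ℝ) := by
          exact_mod_cast Int.toNat_of_nonneg hk.le
        have : Int.fract (X ω) < ε := hω
        rw [h2]; linarith
  have hbound : ∀ k : ℕ, μ (A k) ≤
      ENNReal.ofReal (2 * lam * Real.exp lam * ε * Real.exp (-lam) ^ k) := by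
    intro k
    cases k with
    | zero =>
      have hsub0 : A 0 ⊆ {ω | ε < X ω}ᶜ := by
        intro ω hω
        simp only [hA, Nat.cast_zero, zero_add, mem_setOf_eq] at hω
        simp only [mem_compl_iff, mem_setOf_eq, not_lt]
        exact hω.2.le
      have h1 : μ (A 0) ≤ 1 - μ {ω | ε < X ω} := by
        refine le_trans (measure_mono hsub0) ?_
        rw [measure_compl (measurableSet_lt measurable_const hX) (measure_ne_top μ _)]
        simp [measure_univ]
      rw [hsurv ε hε.le] at h1
      have h2 : (1 : ℝ≥0∞) - ENNReal.ofReal (Real.exp (-lam * ε)) =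
          ENNReal.ofReal (1 - Real.exp (-lam * ε)) := by
        rw [← ENNReal.ofReal_one, ← ENNReal.ofReal_sub _ (Real.exp_nonneg _)]
      refine h1.trans (h2.le.trans (ENNReal.ofReal_le_ofReal ?_))
      have h3 : 1 - Real.exp (-(lam * ε)) ≤ lam * ε := GR_one_sub_exp_le (by positivity)
      have h4 : (1:ℝ) ≤ Real.exp lam := by
        have := Real.add_one_le_exp lam; linarith
      have : -lam * ε = -(lam * ε) := by ring
      rw [this, pow_zero]
      nlinarith [mul_pos hlam hε]
    | succ k =>
      set x : ℝ := (k : ℝ) + 1 with hxd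
      have hx0 : 0 < x := by positivity
      have hxε : 0 ≤ x - ε := by simp only [x]; push_cast; linarith
      have hsub1 : A (k+1) ⊆ {ω | x - ε < X ω} \ {ω | x + ε < X ω} := by
        intro ω hω
        obtain ⟨h1, h2⟩ := hω
        rcases h1 with h1 | h1
        · constructor
          · show x - ε < X ω
            push_cast at h1 h2 ⊢; rw [hxd]; linarith
          · show ¬ (x + ε < X ω)
            push_cast at h1 h2 ⊢; rw [hxd]; linarith
        · exact absurd h1 (Nat.succ_ne_zero k)
      have hmeas1 : MeasurableSet {ω | x + ε < X ω} := measurableSet_lt measurable_const hX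
      have hss : {ω | x + ε < X ω} ⊆ {ω | x - ε < X ω} := fun ω h => by
        simp only [mem_setOf_eq] at *; linarith
      have hdiff : μ ({ω | x - ε < X ω} \ {ω | x + ε < X ω}) =
          μ {ω | x - ε < X ω} - μ {ω | x + ε < X ω} :=
        measure_diff hss hmeas1.nullMeasurableSet (measure_ne_top μ _)
      have h1 : μ (A (k+1)) ≤ ENNReal.ofReal (Real.exp (-lam * (x - ε)))
          - ENNReal.ofReal (Real.exp (-lam * (x + ε))) := by
        refine (measure_mono hsub1).trans ?_
        rw [hdiff, hsurv _ hxε, hsurv _ (by linarith)]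
      rw [← ENNReal.ofReal_sub _ (Real.exp_nonneg _)] at h1
      refine h1.trans (ENNReal.ofReal_le_ofReal ?_)
      have key := GR_exp_sub_exp_le (x := lam * ε) (by positivity)
      have e1 : Real.exp (-lam * (x - ε)) = Real.exp (-lam * x) * Real.exp (lam * ε) := by
        rw [← Real.exp_add]; ring_nf
      have e2 : Real.exp (-lam * (x + ε)) = Real.exp (-lam * x) * Real.exp (-(lam * ε)) := by
        rw [← Real.exp_add]; ring_nf
      have e3 : Real.exp (-lam) ^ (k+1) = Real.exp (-lam * x) := by
        rw [← Real.exp_nat_mul]; congr 1; simp only [x]; push_cast; ring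
      have h4 : Real.exp (lam * ε) ≤ Real.exp lam := by
        apply Real.exp_le_exp.2; nlinarith
      have h5 : 0 < Real.exp (-lam * x) := Real.exp_pos _
      rw [e1, e2, e3]
      calc Real.exp (-lam * x) * Real.exp (lam * ε) - Real.exp (-lam * x) * Real.exp (-(lam * ε))
          = Real.exp (-lam * x) * (Real.exp (lam * ε) - Real.exp (-(lam * ε))) := by ring
        _ ≤ Real.exp (-lam * x) * (2 * (lam * ε) * Real.exp (lam * ε)) := by
            apply mul_le_mul_of_nonneg_left key h5.le
        _ ≤ Real.exp (-lam * x) * (2 * (lam * ε) * Real.exp lam) := by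
            apply mul_le_mul_of_nonneg_left _ h5.le
            apply mul_le_mul_of_nonneg_left h4 (by positivity)
        _ = 2 * lam * Real.exp lam * ε * Real.exp (-lam * x) := by ring
  have hmA : ∀ k, MeasurableSet (A k) := by
    intro k
    apply MeasurableSet.inter
    · exact (measurableSet_le measurable_const hX).union (MeasurableSet.const _)
    · exact measurableSet_lt hX measurable_const
  calc μ {ω | Int.fract (X ω) < ε} ≤ μ (⋃ k, A k) := measure_mono hsub
    _ ≤ ∑' k, μ (A k) := measure_iUnion_le _
    _ ≤ ∑' k, ENNReal.ofReal (2 * lam * Real.exp lam * ε * Real.exp (-lam) ^ k) :=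
        ENNReal.tsum_le_tsum hbound
    _ = ENNReal.ofReal (∑' k, 2 * lam * Real.exp lam * ε * Real.exp (-lam) ^ k) := by
        rw [ENNReal.ofReal_tsum_of_nonneg (fun k => by positivity)]
        exact (summable_geometric_of_lt_one (Real.exp_nonneg _)
          (Real.exp_lt_one_iff.2 (by linarith))).mul_left _
    _ ≤ ENNReal.ofReal (2 * lam * Real.exp lam / (1 - Real.exp (-lam)) * ε) := by
        apply ENNReal.ofReal_le_ofReal
        rw [tsum_mul_left, tsum_geometric_of_lt_one (Real.exp_nonneg _)
          (Real.exp_lt_one_iff.2 (by linarith))]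
        exact le_of_eq (by ring)

/-- Lower bound for the probability that the fractional part is small. -/
lemma GR_le_meas_fract_lt (μ : Measure Ω) [IsProbabilityMeasure μ] {X : Ω → ℝ}
    (hX : Measurable X) {lam : ℝ} (hlam : 0 < lam)
    (hsurv : ∀ x : ℝ, 0 ≤ x → μ {ω | x < X ω} = ENNReal.ofReal (Real.exp (-lam * x)))
    {ε : ℝ} (hε : 0 < ε) (hε1 : ε ≤ 1) :
    ENNReal.ofReal (1 - Real.exp (-lam * (ε / 2))) ≤ μ {ω | Int.fract (X ω) < ε} := by
  set G : Set Ω := {ω | 0 < X ω}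
  set B : Set Ω := {ω | ε / 2 < X ω}
  have hG : μ G = 1 := by
    have := hsurv 0 le_rfl
    simpa using this
  have hB : μ B = ENNReal.ofReal (Real.exp (-lam * (ε / 2))) := hsurv _ (by positivity)
  have hsub : G \ B ⊆ {ω | Int.fract (X ω) < ε} := by
    intro ω hω
    obtain ⟨h1, h2⟩ := hω
    have h1' : 0 < X ω := h1
    have h2' : X ω ≤ ε / 2 := not_lt.1 h2
    have hfr : Int.fract (X ω) = X ω := Int.fract_eq_self.2 ⟨h1'.le, by linarith⟩
    show Int.fract (X ω) < ε
    rw [hfr]; linarith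
  calc ENNReal.ofReal (1 - Real.exp (-lam * (ε / 2)))
      = 1 - ENNReal.ofReal (Real.exp (-lam * (ε / 2))) := by
        rw [← ENNReal.ofReal_one, ← ENNReal.ofReal_sub _ (Real.exp_nonneg _)]
    _ = μ G - μ B := by rw [hG, hB]
    _ ≤ μ (G \ B) := le_measure_diff
    _ ≤ μ {ω | Int.fract (X ω) < ε} := measure_mono hsub


set_option maxHeartbeats 1000000 in
lemma GR_ae_top (μ : Measure Ω) [IsProbabilityMeasure μ] (E : ℕ → Ω → ℝ) (lam : ℝ)
    (hlam : 0 < lam) (hmeas : ∀ n, Measurable (E n))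
    (hexp : ∀ n, ∀ x : ℝ, 0 ≤ x → μ {ω | x < E n ω} = ENNReal.ofReal (Real.exp (-lam * x)))
    (a : ℕ → ℝ) (ha : ∀ n, 0 < a n) (hatop : Tendsto a atTop atTop)
    (hSum : Summable fun n : ℕ => 1 / a n) :
    ∀ᵐ ω ∂μ, liminf (fun n : ℕ => ENNReal.ofReal (a n * Int.fract (E n ω))) atTop = ⊤ := by
  have key : ∀ c : ℝ, 0 < c → ∀ᵐ ω ∂μ, ∀ᶠ n in atTop, c ≤ a n * Int.fract (E n ω) := by
    intro c hc
    set q : ℕ → ℝ := fun n => min (c / a n) 1 with hqd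
    have hq : ∀ n, 0 < q n := fun n => lt_min (div_pos hc (ha n)) one_pos
    have hq1 : ∀ n, q n ≤ 1 := fun n => min_le_right _ _
    set s : ℕ → Set Ω := fun n => {ω | Int.fract (E n ω) < q n} with hsd
    have hP : (0:ℝ) < 1 - Real.exp (-lam) := by
      have := Real.exp_lt_one_iff.2 (neg_lt_zero.2 hlam); linarith
    have hsum : ∑' n, μ (s n) ≠ ⊤ := by
      have hle : ∀ n, μ (s n) ≤ ENNReal.ofReal
          (2 * lam * Real.exp lam / (1 - Real.exp (-lam)) * q n) := fun n =>
        GR_meas_fract_lt_le μ (hmeas _) hlam (hexp _) (hq n) (hq1 n)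
      refine ne_top_of_le_ne_top ?_ (ENNReal.tsum_le_tsum hle)
      have hqsum : Summable q := by
        refine Summable.of_nonneg_of_le (fun n => (hq n).le) (fun n => min_le_left _ _) ?_
        exact (hSum.mul_left c).congr fun n => by rw [mul_one_div]
      have hsum2 : Summable (fun n =>
          2 * lam * Real.exp lam / (1 - Real.exp (-lam)) * q n) := hqsum.mul_left _
      have heq := ENNReal.ofReal_tsum_of_nonneg
        (f := fun n => 2 * lam * Real.exp lam / (1 - Real.exp (-lam)) * q n)
        (fun n => mul_nonneg (div_nonneg (by nlinarith [Real.exp_pos lam]) hP.le) (hq n).le)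
        hsum2
      rw [← heq]
      exact ENNReal.ofReal_ne_top
    filter_upwards [ae_eventually_notMem hsum] with ω hω
    filter_upwards [hω, hatop.eventually_ge_atTop c] with n hn hca
    have hq' : q n = c / a n := min_eq_left ((div_le_one (ha n)).2 hca)
    have hn' : q n ≤ Int.fract (E n ω) := not_lt.1 hn
    rw [hq', div_le_iff₀ (ha n)] at hn'
    linarith [mul_comm (Int.fract (E n ω)) (a n) ▸ hn']
  have H := ae_all_iff.2 fun m : ℕ => key ((m : ℝ) + 1) (by positivity)
  filter_upwards [H] with ω hω
  by_contra hne
  obtain ⟨m, hm⟩ := ENNReal.exists_nat_gt hne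
  have hle : (m : ℝ≥0∞) ≤ liminf (fun n => ENNReal.ofReal (a n * Int.fract (E n ω))) atTop := by
    calc (m : ℝ≥0∞) = liminf (fun _ : ℕ => (m : ℝ≥0∞)) atTop := (liminf_const _).symm
      _ ≤ _ := liminf_le_liminf ((hω m).mono fun n hn => by
          rw [← ENNReal.ofReal_natCast m]
          exact ENNReal.ofReal_le_ofReal (le_trans (by linarith) hn))
  exact absurd hm (not_lt.2 hle)

lemma GR_ae_zero (μ : Measure Ω) [IsProbabilityMeasure μ] (E : ℕ → Ω → ℝ) (lam : ℝ)
    (hlam : 0 < lam) (hmeas : ∀ n, Measurable (E n))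
    (hindep : iIndepFun E μ)
    (hexp : ∀ n, ∀ x : ℝ, 0 ≤ x → μ {ω | x < E n ω} = ENNReal.ofReal (Real.exp (-lam * x)))
    (a : ℕ → ℝ) (ha : ∀ n, 0 < a n) (hatop : Tendsto a atTop atTop)
    (hNS : ¬ Summable fun n : ℕ => 1 / a n) :
    ∀ᵐ ω ∂μ, liminf (fun n : ℕ => ENNReal.ofReal (a n * Int.fract (E n ω))) atTop = 0 := by
  have key : ∀ c : ℝ, 0 < c → ∀ᵐ ω ∂μ, ∃ᶠ n in atTop, a n * Int.fract (E n ω) < c := by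
    intro c hc
    set ε0 : ℝ := min 1 (2 / lam) with hε0d
    have hε0 : 0 < ε0 := lt_min one_pos (by positivity)
    set e : ℕ → ℝ := fun n => min (c / a n) ε0 with hed
    have he : ∀ n, 0 < e n := fun n => lt_min (div_pos hc (ha n)) hε0
    have he1 : ∀ n, e n ≤ 1 := fun n => le_trans (min_le_right _ _) (min_le_left _ _)
    have he2 : ∀ n, lam * e n ≤ 2 := by
      intro n
      have h1 : e n ≤ 2 / lam := le_trans (min_le_right _ _) (min_le_right _ _)
      rw [le_div_iff₀ hlam] at h1
      linarith [mul_comm (e n) lam ▸ h1]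
    set s : ℕ → Set Ω := fun n => {ω | Int.fract (E n ω) < e n} with hsd
    have hms : ∀ n, MeasurableSet (s n) := fun n =>
      measurableSet_lt ((hmeas n).fract) measurable_const
    have hInd : iIndepSet s μ := by
      rw [iIndepSet_iff_meas_biInter hms]
      intro S
      exact hindep.measure_inter_preimage_eq_mul S
        (fun i _ => measurableSet_lt measurable_fract measurable_const)
    have htsum : ∑' n, μ (s n) = ⊤ := by
      by_contra h
      have hsummable := ENNReal.summable_toReal h
      have hlow : ∀ n, lam * e n / 4 ≤ (μ (s n)).toReal := by
        intro n
        have h1 := GR_le_meas_fract_lt μ (hmeas n) hlam (hexp n) (he n) (he1 n)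
        have h2 : lam * e n / 4 ≤ 1 - Real.exp (-lam * (e n / 2)) := by
          have h3 := GR_half_le_one_sub_exp (x := lam * (e n / 2))
            (mul_nonneg hlam.le (by linarith [he n])) (by linarith [he2 n])
          have h4 : -lam * (e n / 2) = -(lam * (e n / 2)) := by ring
          rw [h4]; linarith
        exact le_trans h2 ((ENNReal.ofReal_le_iff_le_toReal (measure_ne_top μ _)).1 h1)
      have hsume : Summable e := by
        have h4 : Summable (fun n => lam * e n / 4) :=
          Summable.of_nonneg_of_le
            (fun n => div_nonneg (mul_nonneg hlam.le (he n).le) (by norm_num)) hlow hsummable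
        refine (h4.mul_left (4 / lam)).congr fun n => ?_
        field_simp
      obtain ⟨N, hN⟩ := eventually_atTop.mp (hatop.eventually_ge_atTop (c / ε0))
      have h5 : Summable (fun n => c / a (n + N)) := by
        refine ((summable_nat_add_iff N).2 hsume).congr fun n => ?_
        simp only [hed]
        rw [min_eq_left]
        have h7 := hN (n + N) (Nat.le_add_left N n)
        rw [div_le_iff₀ hε0] at h7
        rw [div_le_iff₀ (ha _)]
        rw [mul_comm] at h7
        exact h7
      have h6 : Summable (fun n => 1 / a n) := by
        rw [← summable_nat_add_iff N]
        refine (h5.mul_left c⁻¹).congr fun n => ?_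
        field_simp
      exact hNS h6
    have hone := ProbabilityTheory.measure_limsup_eq_one hms hInd htsum
    have hae : ∀ᵐ ω ∂μ, ω ∈ limsup s atTop := by
      have hms' : MeasurableSet (limsup s atTop) := MeasurableSet.measurableSet_limsup hms
      have hc0 : μ (limsup s atTop)ᶜ = 0 := by
        rw [measure_compl hms' (measure_ne_top μ _), hone, measure_univ, tsub_self]
      rw [ae_iff]
      exact hc0
    filter_upwards [hae] with ω hω
    rw [mem_limsup_iff_frequently_mem] at hω
    refine hω.mono fun n hn => ?_
    have hn' : Int.fract (E n ω) < e n := hn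
    calc a n * Int.fract (E n ω) < a n * e n := mul_lt_mul_of_pos_left hn' (ha n)
      _ ≤ a n * (c / a n) := mul_le_mul_of_nonneg_left (min_le_left _ _) (ha n).le
      _ = c := by rw [mul_comm]; exact div_mul_cancel₀ c (ha n).ne'
  have H := ae_all_iff.2 fun m : ℕ => key (1 / ((m : ℝ) + 1)) (by positivity)
  filter_upwards [H] with ω hω
  have hub : ∀ m : ℕ, liminf (fun n => ENNReal.ofReal (a n * Int.fract (E n ω))) atTop
      ≤ ENNReal.ofReal (1 / ((m : ℝ) + 1)) := fun m =>
    liminf_le_of_frequently_le' ((hω m).mono fun n hn => ENNReal.ofReal_le_ofReal hn.le)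
  have h0 : liminf (fun n => ENNReal.ofReal (a n * Int.fract (E n ω))) atTop ≤ 0 := by
    have hten : Tendsto (fun m : ℕ => ENNReal.ofReal (1 / ((m : ℝ) + 1))) atTop (𝓝 0) := by
      have h1 := ENNReal.tendsto_ofReal (tendsto_one_div_add_atTop_nhds_zero_nat)
      simpa using h1
    exact ge_of_tendsto hten (Eventually.of_forall hub)
  exact le_antisymm h0 (zero_le)


/-- For i.i.d. exponential variables `E n` with rate `λ > 0` and
positive constants `a n → ∞`, the liminf of `a n · {E n}` is almost surely a constant
equal to `0` or `∞`; it is `0` a.s. iff `Σ 1/a n = ∞`, and it is `∞` a.s. if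
`Σ 1/a n < ∞`. -/
theorem liminf_fract_exponential
    (μ : Measure Ω) [IsProbabilityMeasure μ] (E : ℕ → Ω → ℝ) (lam : ℝ)
    (hlam : 0 < lam)
    (hmeas : ∀ n, Measurable (E n))
    (hindep : iIndepFun E μ)
    (hexp : ∀ n, ∀ x : ℝ, 0 ≤ x → μ {ω | x < E n ω} = ENNReal.ofReal (Real.exp (-lam * x)))
    (a : ℕ → ℝ) (ha : ∀ n, 0 < a n) (hatop : Tendsto a atTop atTop) :
    ((∀ᵐ ω ∂μ,
        liminf (fun n : ℕ => ENNReal.ofReal (a n * Int.fract (E n ω))) atTop = 0) ∨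
      (∀ᵐ ω ∂μ,
        liminf (fun n : ℕ => ENNReal.ofReal (a n * Int.fract (E n ω))) atTop = ⊤)) ∧
    ((∀ᵐ ω ∂μ,
        liminf (fun n : ℕ => ENNReal.ofReal (a n * Int.fract (E n ω))) atTop = 0) ↔
      ¬ Summable fun n : ℕ => 1 / a n) ∧
    (Summable (fun n : ℕ => 1 / a n) →
      ∀ᵐ ω ∂μ,
        liminf (fun n : ℕ => ENNReal.ofReal (a n * Int.fract (E n ω))) atTop = ⊤) := by
  have hzero : ¬ Summable (fun n : ℕ => 1 / a n) →
      ∀ᵐ ω ∂μ, liminf (fun n : ℕ => ENNReal.ofReal (a n * Int.fract (E n ω))) atTop = 0 :=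
    fun hNS => GR_ae_zero μ E lam hlam hmeas hindep hexp a ha hatop hNS
  have htop : Summable (fun n : ℕ => 1 / a n) →
      ∀ᵐ ω ∂μ, liminf (fun n : ℕ => ENNReal.ofReal (a n * Int.fract (E n ω))) atTop = ⊤ :=
    fun hS => GR_ae_top μ E lam hlam hmeas hexp a ha hatop hS
  have hcontra : (∀ᵐ ω ∂μ,
      liminf (fun n : ℕ => ENNReal.ofReal (a n * Int.fract (E n ω))) atTop = 0) →
      ¬ Summable (fun n : ℕ => 1 / a n) := by
    intro h0 hS
    have h1 := htop hS
    haveI : NeBot (ae μ) := ae_neBot.2 (IsProbabilityMeasure.ne_zero μ)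
    obtain ⟨ω, hω0, hωt⟩ := (h0.and h1).exists
    rw [hω0] at hωt
    exact absurd hωt (by simp)
  refine ⟨?_, ⟨hcontra, hzero⟩, htop⟩
  by_cases hS : Summable (fun n : ℕ => 1 / a n)
  · exact Or.inr (htop hS)
  · exact Or.inl (hzero hS)

end GeomRecords
end
end
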